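/- Let G be a k × m matrix over a finite field GF(s) and let D be the s^k × m array whose rows are x^T G for all x ∈ GF(s)^k. Then D is an orthogonal array of strength t (every t columns of D contain each t-tuple in GF(s)^t exactly s^{k−t} times) if and only if every t columns of G are linearly independent over GF(s). -/

import Mathlib

/-- The regular array with rows xᵀG, x ∈ GF(s)^k, has strength t (every t distinct
columns contain each t-tuple exactly s^{k-t} times, i.e. count * s^t = s^k) if and
only if every t columns of G are linearly independent over GF(s). -/
theorem stmt_3 (s k m t : ℕ) (F : Type*) [Field F] [Fintype F] [DecidableEq F]
    (hF : Fintype.card F = s) (G : Matrix (Fin k) (Fin m) F) :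
    (∀ c : Fin t → Fin m, Function.Injective c →
        ∀ a : Fin t → F,
          (Finset.univ.filter (fun x : Fin k → F =>
            ∀ i, Matrix.vecMul x G (c i) = a i)).card * s ^ t = s ^ k)
      ↔ (∀ c : Fin t → Fin m, Function.Injective c →
          LinearIndependent F (fun i => fun rI => G rI (c i))) := by
  have hs : 0 < s := hF ▸ Fintype.card_pos
  have hcardk : Fintype.card (Fin k → F) = s ^ k := by
    simp [Fintype.card_fun, hF]
  have hcardt : Fintype.card (Fin t → F) = s ^ t := by
    simp [Fintype.card_fun, hF]
  -- For each c, set up the linear map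
  have key : ∀ c : Fin t → Fin m,
      ((∀ a : Fin t → F,
          (Finset.univ.filter (fun x : Fin k → F =>
            ∀ i, Matrix.vecMul x G (c i) = a i)).card * s ^ t = s ^ k)
        ↔ LinearIndependent F (fun i => fun rI => G rI (c i))) := by
    intro c
    set M : Matrix (Fin t) (Fin k) F := Matrix.of fun i r => G r (c i) with hM
    set φ : (Fin k → F) →ₗ[F] (Fin t → F) := M.mulVecLin with hφ
    have hφapp : ∀ (x : Fin k → F) (i : Fin t), φ x i = Matrix.vecMul x G (c i) := by
      intro x i
      simp [hφ, hM, Matrix.mulVec, Matrix.vecMul, dotProduct, mul_comm]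
    have hfilter : ∀ a : Fin t → F,
        (Finset.univ.filter (fun x : Fin k → F =>
          ∀ i, Matrix.vecMul x G (c i) = a i))
        = (Finset.univ.filter (fun x : Fin k → F => φ x = a)) := by
      intro a
      apply Finset.filter_congr
      intro x _
      simp [funext_iff, hφapp]
    -- surjectivity ↔ linear independence
    have hsurj_li : Function.Surjective φ ↔
        LinearIndependent F (fun i => fun rI => G rI (c i)) := by
      have hrows : (fun i => fun rI => G rI (c i)) = fun i => M i := rfl
      rw [hrows]
      constructor
      · intro hsurj
        have hrange : LinearMap.range φ = ⊤ := LinearMap.range_eq_top.mpr hsurj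
        have hrank : M.rank = t := by
          rw [Matrix.rank, hrange, finrank_top, Module.finrank_pi, Fintype.card_fin]
        rw [Matrix.rank_eq_finrank_span_row] at hrank
        rw [linearIndependent_iff_card_eq_finrank_span]
        simp only [Set.finrank, Fintype.card_fin]; exact hrank.symm
      · intro hli
        have hrank : M.rank = t := by
          rw [Matrix.rank_eq_finrank_span_row]
          rw [linearIndependent_iff_card_eq_finrank_span] at hli
          simp only [Set.finrank, Fintype.card_fin] at hli; exact hli.symm
        rw [← LinearMap.range_eq_top]
        apply Submodule.eq_top_of_finrank_eq
        rw [show LinearMap.range φ = LinearMap.range M.mulVecLin from rfl, ← Matrix.rank,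
          hrank, Module.finrank_pi, Fintype.card_fin]
    rw [← hsurj_li]
    constructor
    · intro h y
      have hy := h y
      rw [hfilter] at hy
      have hpos : 0 < (Finset.univ.filter (fun x : Fin k → F => φ x = y)).card := by
        rcases Nat.eq_zero_or_pos (Finset.univ.filter (fun x : Fin k → F => φ x = y)).card
          with h0 | h0
        · rw [h0, zero_mul] at hy
          exact absurd hy.symm (pow_pos hs k).ne'
        · exact h0
      obtain ⟨x, hx⟩ := Finset.card_pos.mp hpos
      exact ⟨x, (Finset.mem_filter.mp hx).2⟩
    · intro hsurj a
      rw [hfilter]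
      have hcards : ∀ b : Fin t → F,
          (Finset.univ.filter (fun x : Fin k → F => φ x = b)).card
            = (Finset.univ.filter (fun x : Fin k → F => φ x = 0)).card := by
        intro b
        obtain ⟨x₀, hx₀⟩ := hsurj b
        apply Finset.card_nbij' (fun x => x - x₀) (fun y => y + x₀) <;>
          simp +contextual [Set.MapsTo, Set.LeftInvOn, Set.RightInvOn, map_sub, map_add, hx₀, sub_eq_iff_eq_add]
      have hsum : ∑ b : Fin t → F,
          (Finset.univ.filter (fun x : Fin k → F => φ x = b)).card = s ^ k := by
        rw [← hcardk, ← Finset.card_univ]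
        exact (Finset.card_eq_sum_card_fiberwise (fun x _ => Finset.mem_univ (φ x))).symm
      rw [Finset.sum_congr rfl (fun b _ => hcards b), Finset.sum_const, Finset.card_univ,
        hcardt, smul_eq_mul] at hsum
      rw [hcards a, mul_comm]
      exact hsum
  constructor
  · intro h c hc
    exact (key c).mp (h c hc)
  · intro h c hc
    exact (key c).mpr (h c hc)
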